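/- Let (H,R) be quasitriangular, A a quasi-commutative left H-module algebra, and V, W quasi-commutative left H-module A-bimodules (v·a = (R̄^α▷a)·(R̄_α▷v)). Then the Hom-module Hom_A(V,W) of right A-linear maps is itself a quasi-commutative left H-module A-bimodule: for all a ∈ A and P ∈ Hom_A(V,W), P·a = (R̄^α▷a)·(R̄_α ▶ P), where P·a = P∘l_a, a·P = l_a∘P and ▶ is the adjoint action. -/

import Mathlib

open TensorProduct

noncomputable section

variable (K : Type*) [CommRing K] (H : Type*) [Ring H] [HopfAlgebra K H]

namespace TwistPaper

def muH : H ⊗[K] H →ₗ[K] H := LinearMap.mul' K H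
def ΔH : H →ₗ[K] H ⊗[K] H := Coalgebra.comul
def εH : H →ₗ[K] K := Coalgebra.counit
def SH : H →ₗ[K] H := HopfAlgebra.antipode (R := K)

/-- `x ⊗ y ↦ x ⊗ (y ⊗ 1)`, i.e. `R ↦ R₁₂`. -/
def ins3 : H ⊗[K] H →ₗ[K] H ⊗[K] (H ⊗[K] H) :=
  LinearMap.lTensor H ((TensorProduct.mk K H H).flip 1)
/-- `R ↦ R₂₃ = 1 ⊗ R`. -/
def ins1 : H ⊗[K] H →ₗ[K] H ⊗[K] (H ⊗[K] H) :=
  TensorProduct.mk K H (H ⊗[K] H) 1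
/-- `x ⊗ y ↦ x ⊗ (1 ⊗ y)`, i.e. `R ↦ R₁₃`. -/
def ins2 : H ⊗[K] H →ₗ[K] H ⊗[K] (H ⊗[K] H) :=
  LinearMap.lTensor H (TensorProduct.mk K H H 1)
def comulLeft : H ⊗[K] H →ₗ[K] H ⊗[K] (H ⊗[K] H) :=
  (TensorProduct.assoc K H H H).toLinearMap ∘ₗ (ΔH K H).rTensor H
def comulRight : H ⊗[K] H →ₗ[K] H ⊗[K] (H ⊗[K] H) :=
  (ΔH K H).lTensor H

/-- `(H, R)` is quasitriangular: `R` is invertible, `Δ^cop(ξ) = R Δ(ξ) R⁻¹`,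
`(Δ⊗id)R = R₁₃R₂₃` and `(id⊗Δ)R = R₁₃R₁₂`. -/
structure IsQuasitriangular (Rm Rinv : H ⊗[K] H) : Prop where
  mul_inv : Rm * Rinv = 1
  inv_mul : Rinv * Rm = 1
  quasi_cocomm : ∀ ξ : H, TensorProduct.comm K H H (ΔH K H ξ) = Rm * ΔH K H ξ * Rinv
  hexagon1 : comulLeft K H Rm = ins2 K H Rm * ins1 K H Rm
  hexagon2 : comulRight K H Rm = ins2 K H Rm * ins3 K H Rm

/-- `sw x f g c v w = Σ c (f x¹ v) (g x² w)` for `x = Σ x¹ ⊗ x²`. -/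
def sw {V W V' W' Z : Type*}
    [AddCommGroup V] [Module K V] [AddCommGroup W] [Module K W]
    [AddCommGroup V'] [Module K V'] [AddCommGroup W'] [Module K W']
    [AddCommGroup Z] [Module K Z]
    (x : H ⊗[K] H) (f : H →ₗ[K] V →ₗ[K] V') (g : H →ₗ[K] W →ₗ[K] W')
    (c : V' →ₗ[K] W' →ₗ[K] Z) : V →ₗ[K] W →ₗ[K] Z :=
  ((TensorProduct.mapBilinear (RingHom.id K) H H V' W').compr₂
      (TensorProduct.lift c ∘ₗ LinearMap.applyₗ (R := K) x)).compl₁₂ f.flip g.flip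

/-- `ρ` is a left `H`-module structure. -/
def IsHAction {V : Type*} [AddCommGroup V] [Module K V] (ρ : H →ₗ[K] V →ₗ[K] V) : Prop :=
  (∀ ξ ζ : H, ∀ v : V, ρ (ξ * ζ) v = ρ ξ (ρ ζ v)) ∧ (∀ v : V, ρ 1 v = v)

/-- `(A, m, ρ)` is a left `H`-module algebra. -/
def IsModuleAlgebra {A : Type*} [AddCommGroup A] [Module K A]
    (m : A →ₗ[K] A →ₗ[K] A) (ρ : H →ₗ[K] A →ₗ[K] A) : Prop :=
  IsHAction K H ρ ∧ ∀ (ξ : H) (a b : A), ρ ξ (m a b) = sw K H (ΔH K H ξ) ρ ρ m a b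

/-- `conjEnd f g (η ⊗ ζ) P = f η ∘ₗ P ∘ₗ g ζ` on `Hom_K(V,W)`. -/
def conjEnd {V W : Type*} [AddCommGroup V] [Module K V] [AddCommGroup W] [Module K W]
    (f : H →ₗ[K] W →ₗ[K] W) (g : H →ₗ[K] V →ₗ[K] V) :
    H ⊗[K] H →ₗ[K] (V →ₗ[K] W) →ₗ[K] (V →ₗ[K] W) :=
  TensorProduct.lift
    ((LinearMap.llcomp K (V →ₗ[K] W) (V →ₗ[K] W) (V →ₗ[K] W) ∘ₗ
        (LinearMap.llcomp K V W W ∘ₗ f)).compl₂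
      ((LinearMap.llcomp K V V W).flip ∘ₗ g))

/-- The `H`-adjoint action `ξ ▶ P = (ξ₁ ▷) ∘ P ∘ (S(ξ₂) ▷)` on `Hom_K(V,W)`. -/
def adjHom {V W : Type*} [AddCommGroup V] [Module K V] [AddCommGroup W] [Module K W]
    (ρW : H →ₗ[K] W →ₗ[K] W) (ρV : H →ₗ[K] V →ₗ[K] V) :
    H →ₗ[K] (V →ₗ[K] W) →ₗ[K] (V →ₗ[K] W) :=
  conjEnd K H ρW (ρV ∘ₗ SH K H) ∘ₗ ΔH K H

/-- The tensor product action `ξ ▷ (v ⊗ w) = (ξ₁ ▷ v) ⊗ (ξ₂ ▷ w)`. -/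
def tensAct {V W : Type*} [AddCommGroup V] [Module K V] [AddCommGroup W] [Module K W]
    (ρV : H →ₗ[K] V →ₗ[K] V) (ρW : H →ₗ[K] W →ₗ[K] W) :
    H →ₗ[K] (V ⊗[K] W) →ₗ[K] (V ⊗[K] W) :=
  (TensorProduct.homTensorHomMap (RingHom.id K) V W V W ∘ₗ TensorProduct.map ρV ρW) ∘ₗ ΔH K H

/-- The `R`-tensor product of `K`-linear maps,
`P ⊗_R Q = (P ∘ (R̄^α ▷)) ⊗ (R̄_α ▶ Q)`, as a bilinear map in `(P,Q)`. -/
def otimesR {V W V' W' : Type*}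
    [AddCommGroup V] [Module K V] [AddCommGroup W] [Module K W]
    [AddCommGroup V'] [Module K V'] [AddCommGroup W'] [Module K W']
    (Rinv : H ⊗[K] H)
    (ρV : H →ₗ[K] V →ₗ[K] V) (ρW : H →ₗ[K] W →ₗ[K] W) (ρW' : H →ₗ[K] W' →ₗ[K] W') :
    (V →ₗ[K] V') →ₗ[K] (W →ₗ[K] W') →ₗ[K] (V ⊗[K] W →ₗ[K] V' ⊗[K] W') :=
  ((TensorProduct.mapBilinear (RingHom.id K) H H (V →ₗ[K] V') (W →ₗ[K] W')).compr₂
      (TensorProduct.homTensorHomMap (RingHom.id K) V W V' W' ∘ₗ LinearMap.applyₗ (R := K) Rinv)).compl₁₂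
    (((LinearMap.llcomp K H (V →ₗ[K] V) (V →ₗ[K] V')).flip ρV) ∘ₗ LinearMap.llcomp K V V V')
    ((adjHom K H ρW' ρW).flip)



/-! ### Auxiliary lemmas -/

section AuxAlg

def ins2A : H ⊗[K] H →ₐ[K] H ⊗[K] (H ⊗[K] H) :=
  Algebra.TensorProduct.map (AlgHom.id K H) Algebra.TensorProduct.includeRight
def ins3A : H ⊗[K] H →ₐ[K] H ⊗[K] (H ⊗[K] H) :=
  Algebra.TensorProduct.map (AlgHom.id K H) Algebra.TensorProduct.includeLeft
def comulRightA : H ⊗[K] H →ₐ[K] H ⊗[K] (H ⊗[K] H) :=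
  Algebra.TensorProduct.map (AlgHom.id K H) (Bialgebra.comulAlgHom K H)
/-- `y ⊗ z ↦ ε(y) z`. -/
def epsLeftA : H ⊗[K] H →ₐ[K] H :=
  (Algebra.TensorProduct.lid K H).toAlgHom.comp
    (Algebra.TensorProduct.map (Bialgebra.counitAlgHom K H) (AlgHom.id K H))
/-- `y ⊗ z ↦ ε(z) y`. -/
def epsRightA : H ⊗[K] H →ₐ[K] H :=
  (Algebra.TensorProduct.rid K K H).toAlgHom.comp
    (Algebra.TensorProduct.map (AlgHom.id K H) (Bialgebra.counitAlgHom K H))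
def epsMidA : H ⊗[K] (H ⊗[K] H) →ₐ[K] H ⊗[K] H :=
  Algebra.TensorProduct.map (AlgHom.id K H) (epsLeftA K H)

lemma ins2_eq : ins2 K H = (ins2A K H).toLinearMap := TensorProduct.ext' fun _ _ => rfl
lemma ins3_eq : ins3 K H = (ins3A K H).toLinearMap := TensorProduct.ext' fun _ _ => rfl
lemma comulRight_eq : comulRight K H = (comulRightA K H).toLinearMap :=
  TensorProduct.ext' fun _ _ => rfl

lemma ins2_mul (x y : H ⊗[K] H) : ins2 K H (x * y) = ins2 K H x * ins2 K H y := by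
  have h : ∀ z, ins2 K H z = ins2A K H z := LinearMap.congr_fun (ins2_eq K H)
  rw [h, h, h]; exact map_mul _ _ _
lemma ins3_mul (x y : H ⊗[K] H) : ins3 K H (x * y) = ins3 K H x * ins3 K H y := by
  have h : ∀ z, ins3 K H z = ins3A K H z := LinearMap.congr_fun (ins3_eq K H)
  rw [h, h, h]; exact map_mul _ _ _
lemma ins2_one : ins2 K H 1 = 1 := by
  have h : ∀ z, ins2 K H z = ins2A K H z := LinearMap.congr_fun (ins2_eq K H)
  rw [h]; exact map_one _
lemma ins3_one : ins3 K H 1 = 1 := by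
  have h : ∀ z, ins3 K H z = ins3A K H z := LinearMap.congr_fun (ins3_eq K H)
  rw [h]; exact map_one _
lemma comulRight_mul (x y : H ⊗[K] H) :
    comulRight K H (x * y) = comulRight K H x * comulRight K H y := by
  have h : ∀ z, comulRight K H z = comulRightA K H z := LinearMap.congr_fun (comulRight_eq K H)
  rw [h, h, h]; exact map_mul _ _ _
lemma comulRight_one : comulRight K H 1 = 1 := by
  have h : ∀ z, comulRight K H z = comulRightA K H z := LinearMap.congr_fun (comulRight_eq K H)
  rw [h]; exact map_one _

lemma epsMid_comulRight (x : H ⊗[K] H) : epsMidA K H (comulRight K H x) = x := by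
  have : (epsMidA K H).toLinearMap ∘ₗ comulRight K H = LinearMap.id := by
    apply TensorProduct.ext'
    intro a b
    show epsMidA K H (a ⊗ₜ[K] ΔH K H b) = a ⊗ₜ[K] b
    have h1 : ∀ z : H ⊗[K] H, epsLeftA K H z = TensorProduct.lid K H ((εH K H).rTensor H z) := by
      intro z
      have : (epsLeftA K H).toLinearMap
          = (TensorProduct.lid K H).toLinearMap ∘ₗ (εH K H).rTensor H :=
        TensorProduct.ext' fun _ _ => rfl
      exact LinearMap.congr_fun this z
    have : epsMidA K H (a ⊗ₜ[K] ΔH K H b) = a ⊗ₜ[K] epsLeftA K H (ΔH K H b) := rfl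
    rw [this, h1, ΔH, εH, Coalgebra.rTensor_counit_comul, TensorProduct.lid_tmul, one_smul]
  exact LinearMap.congr_fun this x

lemma epsMid_ins2 (x : H ⊗[K] H) : epsMidA K H (ins2 K H x) = x := by
  have : (epsMidA K H).toLinearMap ∘ₗ ins2 K H = LinearMap.id := by
    apply TensorProduct.ext'
    intro a b
    show epsMidA K H (a ⊗ₜ[K] (1 ⊗ₜ[K] b)) = a ⊗ₜ[K] b
    show a ⊗ₜ[K] epsLeftA K H (1 ⊗ₜ[K] b) = a ⊗ₜ[K] b
    congr 1
    show TensorProduct.lid K H (Bialgebra.counitAlgHom K H 1 ⊗ₜ[K] b) = b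
    simp
  exact LinearMap.congr_fun this x

lemma epsMid_ins3 (x : H ⊗[K] H) :
    epsMidA K H (ins3 K H x)
      = (Algebra.TensorProduct.includeLeft : H →ₐ[K] H ⊗[K] H) (epsRightA K H x) := by
  have : (epsMidA K H).toLinearMap ∘ₗ ins3 K H
      = (Algebra.TensorProduct.includeLeft (S := K)).toLinearMap
          ∘ₗ (epsRightA K H).toLinearMap := by
    apply TensorProduct.ext'
    intro a b
    simp [epsMidA, epsLeftA, epsRightA, ins3, Algebra.TensorProduct.map_tmul,
      smul_tmul, tmul_smul]
  exact LinearMap.congr_fun this x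

variable {K H} in
lemma eps_Rm {Rm Rinv : H ⊗[K] H} (hR : IsQuasitriangular K H Rm Rinv) :
    epsRightA K H Rm = 1 := by
  have h := congrArg (epsMidA K H) hR.hexagon2
  rw [map_mul, epsMid_comulRight, epsMid_ins2, epsMid_ins3] at h
  have h2 : (Algebra.TensorProduct.includeLeft : H →ₐ[K] H ⊗[K] H) (epsRightA K H Rm) = 1 := by
    have := congrArg (Rinv * ·) h
    simpa [← mul_assoc, hR.inv_mul] using this.symm
  have h3 := congrArg (epsRightA K H) h2
  rw [map_one] at h3
  rw [← h3]
  show _ = epsRightA K H ((epsRightA K H Rm) ⊗ₜ[K] 1)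
  show _ = (Algebra.TensorProduct.rid K K H)
      ((epsRightA K H Rm) ⊗ₜ[K] Bialgebra.counitAlgHom K H 1)
  simp

variable {K H} in
lemma eps_Rinv {Rm Rinv : H ⊗[K] H} (hR : IsQuasitriangular K H Rm Rinv) :
    epsRightA K H Rinv = 1 := by
  have := congrArg (epsRightA K H) hR.mul_inv
  rw [map_mul, map_one, eps_Rm hR, one_mul] at this
  exact this

variable {K H} in
lemma hexagon2_inv {Rm Rinv : H ⊗[K] H} (hR : IsQuasitriangular K H Rm Rinv) :
    comulRight K H Rinv = ins3 K H Rinv * ins2 K H Rinv := by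
  have hu : comulRight K H Rm * (ins3 K H Rinv * ins2 K H Rinv) = 1 := by
    rw [hR.hexagon2, mul_assoc, ← mul_assoc (ins3 K H Rm), ← ins3_mul, hR.mul_inv,
      ins3_one, one_mul, ← ins2_mul, hR.mul_inv, ins2_one]
  have hv : comulRight K H Rinv * comulRight K H Rm = 1 := by
    rw [← comulRight_mul, hR.inv_mul, comulRight_one]
  calc comulRight K H Rinv = comulRight K H Rinv * (comulRight K H Rm
        * (ins3 K H Rinv * ins2 K H Rinv)) := by rw [hu, mul_one]
    _ = (comulRight K H Rinv * comulRight K H Rm) * (ins3 K H Rinv * ins2 K H Rinv) := by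
        rw [mul_assoc]
    _ = ins3 K H Rinv * ins2 K H Rinv := by rw [hv, one_mul]

/-- `F = id ⊗ (m ∘ (id ⊗ S))`. -/
def FmS : H ⊗[K] (H ⊗[K] H) →ₗ[K] H ⊗[K] H :=
  LinearMap.lTensor H (muH K H ∘ₗ LinearMap.lTensor H (SH K H))

lemma FmS_ins3_mul_ins2 (x y : H ⊗[K] H) :
    FmS K H (ins3 K H x * ins2 K H y) = x * LinearMap.lTensor H (SH K H) y := by
  induction x using TensorProduct.induction_on with
  | zero => simp [zero_mul]
  | add x₁ x₂ h1 h2 => simp only [map_add, add_mul, h1, h2]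
  | tmul a b =>
    induction y using TensorProduct.induction_on with
    | zero => simp [mul_zero]
    | add y₁ y₂ h1 h2 => simp only [map_add, mul_add, h1, h2]
    | tmul c d =>
      show FmS K H ((a ⊗ₜ[K] (b ⊗ₜ[K] 1)) * (c ⊗ₜ[K] (1 ⊗ₜ[K] d))) = _
      rw [Algebra.TensorProduct.tmul_mul_tmul, Algebra.TensorProduct.tmul_mul_tmul,
        one_mul, mul_one]
      show (a * c) ⊗ₜ[K] muH K H (b ⊗ₜ[K] SH K H d) = (a ⊗ₜ[K] b) * (c ⊗ₜ[K] SH K H d)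
      rw [Algebra.TensorProduct.tmul_mul_tmul, muH, LinearMap.mul'_apply]

variable {K H} in
lemma lTensor_antipode_Rinv {Rm Rinv : H ⊗[K] H} (hR : IsQuasitriangular K H Rm Rinv) :
    LinearMap.lTensor H (SH K H) Rinv = Rm := by
  have key : Rinv * LinearMap.lTensor H (SH K H) Rinv = 1 := by
    rw [← FmS_ins3_mul_ins2, ← hexagon2_inv hR]
    have h1 : FmS K H ∘ₗ comulRight K H
        = LinearMap.lTensor H (muH K H ∘ₗ LinearMap.lTensor H (SH K H) ∘ₗ ΔH K H) := by
      rw [FmS, comulRight, ← LinearMap.lTensor_comp]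
      rfl
    have h2 : muH K H ∘ₗ LinearMap.lTensor H (SH K H) ∘ₗ ΔH K H
        = Algebra.linearMap K H ∘ₗ εH K H := by
      rw [muH, SH, ΔH, εH, ← HopfAlgebra.mul_antipode_lTensor_comul (R := K) (A := H)]
    have h3 : ∀ z : H ⊗[K] H, LinearMap.lTensor H (Algebra.linearMap K H ∘ₗ εH K H) z
        = (Algebra.TensorProduct.includeLeft : H →ₐ[K] H ⊗[K] H) (epsRightA K H z) := by
      intro z
      have : LinearMap.lTensor H (Algebra.linearMap K H ∘ₗ εH K H)
          = (Algebra.TensorProduct.includeLeft : H →ₐ[K] H ⊗[K] H).toLinearMap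
            ∘ₗ (epsRightA K H).toLinearMap := by
        apply TensorProduct.ext'
        intro a b
        show a ⊗ₜ[K] (Algebra.linearMap K H (εH K H b)) = _
        simp [epsRightA, εH, Algebra.linearMap, smul_tmul, tmul_smul,
          Algebra.algebraMap_eq_smul_one]
      rw [this]
      rfl
    have := LinearMap.congr_fun h1 Rinv
    rw [LinearMap.comp_apply] at this
    rw [this, h2, h3, eps_Rinv hR, map_one]
  calc LinearMap.lTensor H (SH K H) Rinv
      = (Rm * Rinv) * LinearMap.lTensor H (SH K H) Rinv := by rw [hR.mul_inv, one_mul]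
    _ = Rm * (Rinv * LinearMap.lTensor H (SH K H) Rinv) := by rw [mul_assoc]
    _ = Rm := by rw [key, mul_one]

end AuxAlg

section swLemmas
variable {V₀ W₀ V₁ W₁ Z₀ Z₁ : Type*}
    [AddCommGroup V₀] [Module K V₀] [AddCommGroup W₀] [Module K W₀]
    [AddCommGroup V₁] [Module K V₁] [AddCommGroup W₁] [Module K W₁]
    [AddCommGroup Z₀] [Module K Z₀] [AddCommGroup Z₁] [Module K Z₁]

lemma sw_apply (x : H ⊗[K] H) (f : H →ₗ[K] V₀ →ₗ[K] V₁) (g : H →ₗ[K] W₀ →ₗ[K] W₁)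
    (c : V₁ →ₗ[K] W₁ →ₗ[K] Z₀) (u : V₀) (w : W₀) :
    sw K H x f g c u w = TensorProduct.lift c (TensorProduct.map (f.flip u) (g.flip w) x) := rfl

lemma sw_tmul (ξ η : H) (f : H →ₗ[K] V₀ →ₗ[K] V₁) (g : H →ₗ[K] W₀ →ₗ[K] W₁)
    (c : V₁ →ₗ[K] W₁ →ₗ[K] Z₀) (u : V₀) (w : W₀) :
    sw K H (ξ ⊗ₜ[K] η) f g c u w = c (f ξ u) (g η w) := rfl

lemma sw_zero (f : H →ₗ[K] V₀ →ₗ[K] V₁) (g : H →ₗ[K] W₀ →ₗ[K] W₁)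
    (c : V₁ →ₗ[K] W₁ →ₗ[K] Z₀) (u : V₀) (w : W₀) :
    sw K H 0 f g c u w = 0 := by
  rw [sw_apply]; simp

lemma sw_add (x y : H ⊗[K] H) (f : H →ₗ[K] V₀ →ₗ[K] V₁) (g : H →ₗ[K] W₀ →ₗ[K] W₁)
    (c : V₁ →ₗ[K] W₁ →ₗ[K] Z₀) (u : V₀) (w : W₀) :
    sw K H (x + y) f g c u w = sw K H x f g c u w + sw K H y f g c u w := by
  rw [sw_apply, sw_apply, sw_apply, map_add, map_add]

lemma sw_add' (x y : H ⊗[K] H) (f : H →ₗ[K] V₀ →ₗ[K] V₁) (g : H →ₗ[K] W₀ →ₗ[K] W₁)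
    (c : V₁ →ₗ[K] W₁ →ₗ[K] Z₀) :
    sw K H (x + y) f g c = sw K H x f g c + sw K H y f g c := by
  ext u w; exact sw_add K H x y f g c u w

lemma sw_post (x : H ⊗[K] H) (f : H →ₗ[K] V₀ →ₗ[K] V₁) (g : H →ₗ[K] W₀ →ₗ[K] W₁)
    (c : V₁ →ₗ[K] W₁ →ₗ[K] Z₀) (Q : Z₀ →ₗ[K] Z₁) (u : V₀) (w : W₀) :
    Q (sw K H x f g c u w) = sw K H x f g (c.compr₂ Q) u w := by
  rw [sw_apply, sw_apply, TensorProduct.lift_compr₂]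
  rfl

end swLemmas

section swMul
variable {A₀ V₀ Z₀ : Type*}
    [AddCommGroup A₀] [Module K A₀] [AddCommGroup V₀] [Module K V₀]
    [AddCommGroup Z₀] [Module K Z₀]
    (f : H →ₗ[K] A₀ →ₗ[K] A₀) (g : H →ₗ[K] V₀ →ₗ[K] V₀)

lemma sw_mul (h1 : ∀ (ξ ζ : H) (b : A₀), f (ξ * ζ) b = f ξ (f ζ b))
    (h2 : ∀ (ξ ζ : H) (u : V₀), g (ξ * ζ) u = g ξ (g ζ u))
    (x y : H ⊗[K] H) (c : A₀ →ₗ[K] V₀ →ₗ[K] Z₀) (b : A₀) (u : V₀) :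
    sw K H (x * y) f g c b u = sw K H y f g (sw K H x f g c) b u := by
  induction y using TensorProduct.induction_on with
  | zero => rw [mul_zero, sw_zero, sw_zero]
  | add y₁ y₂ hy₁ hy₂ => rw [mul_add, sw_add, hy₁, hy₂, sw_add]
  | tmul ξ' η' =>
    induction x using TensorProduct.induction_on with
    | zero => rw [zero_mul, sw_zero, sw_tmul]; simp [sw_apply]
    | add x₁ x₂ hx₁ hx₂ =>
      rw [add_mul, sw_add, hx₁, hx₂, sw_tmul, sw_tmul, sw_tmul, sw_add',
        LinearMap.add_apply, LinearMap.add_apply]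
    | tmul ξ η =>
      rw [Algebra.TensorProduct.tmul_mul_tmul, sw_tmul, sw_tmul, sw_tmul, h1, h2]

lemma sw_one (h1 : ∀ b : A₀, f 1 b = b) (h2 : ∀ u : V₀, g 1 u = u)
    (c : A₀ →ₗ[K] V₀ →ₗ[K] Z₀) (b : A₀) (u : V₀) :
    sw K H (1 : H ⊗[K] H) f g c b u = c b u := by
  rw [Algebra.TensorProduct.one_def, sw_tmul, h1, h2]

end swMul

variable {A V W : Type*} [AddCommGroup A] [Module K A]
    [AddCommGroup V] [Module K V] [AddCommGroup W] [Module K W]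

section triW

/-- `η ⊗ ζ ↦ η ▷ P (ζ ▷ v)`. -/
def triW2 (ρV : H →ₗ[K] V →ₗ[K] V) (ρW : H →ₗ[K] W →ₗ[K] W) (P : V →ₗ[K] W) (v : V) :
    H ⊗[K] H →ₗ[K] W :=
  TensorProduct.lift (LinearMap.mk₂ K (fun η ζ => ρW η (P (ρV ζ v)))
    (fun _ _ _ => by simp [map_add, LinearMap.add_apply])
    (fun _ _ _ => by simp [map_smul, LinearMap.smul_apply])
    (fun _ _ _ => by simp [map_add, LinearMap.add_apply])
    (fun _ _ _ => by simp [map_smul, LinearMap.smul_apply]))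

/-- `ξ ⊗ (η ⊗ ζ) ↦ (ξ ▷ a) · (η ▷ P (ζ ▷ v))`. -/
def triW (ρA : H →ₗ[K] A →ₗ[K] A) (ρV : H →ₗ[K] V →ₗ[K] V) (ρW : H →ₗ[K] W →ₗ[K] W)
    (lW : A →ₗ[K] W →ₗ[K] W) (a : A) (P : V →ₗ[K] W) (v : V) :
    H ⊗[K] (H ⊗[K] H) →ₗ[K] W :=
  TensorProduct.lift (LinearMap.mk₂ K (fun ξ z => lW (ρA ξ a) (triW2 K H ρV ρW P v z))
    (fun _ _ _ => by simp [map_add, LinearMap.add_apply])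
    (fun _ _ _ => by simp [map_smul, LinearMap.smul_apply])
    (fun _ _ _ => by simp [map_add, LinearMap.add_apply])
    (fun _ _ _ => by simp [map_smul, LinearMap.smul_apply]))

lemma triW_tmul (ρA : H →ₗ[K] A →ₗ[K] A) (ρV : H →ₗ[K] V →ₗ[K] V) (ρW : H →ₗ[K] W →ₗ[K] W)
    (lW : A →ₗ[K] W →ₗ[K] W) (a : A) (P : V →ₗ[K] W) (v : V) (ξ η ζ : H) :
    triW K H ρA ρV ρW lW a P v (ξ ⊗ₜ[K] (η ⊗ₜ[K] ζ)) = lW (ρA ξ a) (ρW η (P (ρV ζ v))) := rfl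

variable (ρA : H →ₗ[K] A →ₗ[K] A) (ρV : H →ₗ[K] V →ₗ[K] V) (ρW : H →ₗ[K] W →ₗ[K] W)
    (lW : A →ₗ[K] W →ₗ[K] W) (a : A) (P : V →ₗ[K] W) (v : V)

lemma triW_aux (hA1 : ∀ (ξ ζ : H) (b : A), ρA (ξ * ζ) b = ρA ξ (ρA ζ b))
    (x : H ⊗[K] H) (ξ' η' : H) :
    sw K H x ρA ρW lW (ρA ξ' a) (P (ρV η' v))
      = triW K H ρA ρV ρW lW a P v (ins3 K H x * ins2 K H (ξ' ⊗ₜ[K] η')) := by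
  induction x using TensorProduct.induction_on with
  | zero => rw [sw_zero, map_zero, zero_mul, map_zero]
  | add x₁ x₂ h₁ h₂ => rw [sw_add, h₁, h₂, map_add, add_mul, map_add]
  | tmul ξ η =>
    rw [sw_tmul, ← hA1]
    show _ = triW K H ρA ρV ρW lW a P v
      ((ξ ⊗ₜ[K] (η ⊗ₜ[K] (1 : H))) * (ξ' ⊗ₜ[K] ((1 : H) ⊗ₜ[K] η')))
    rw [Algebra.TensorProduct.tmul_mul_tmul, Algebra.TensorProduct.tmul_mul_tmul,
      one_mul, mul_one]
    rfl

lemma stepD (hA1 : ∀ (ξ ζ : H) (b : A), ρA (ξ * ζ) b = ρA ξ (ρA ζ b))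
    (x y : H ⊗[K] H) :
    sw K H y ρA ρV ((sw K H x ρA ρW lW).compl₂ P) a v
      = triW K H ρA ρV ρW lW a P v (ins3 K H x * ins2 K H y) := by
  induction y using TensorProduct.induction_on with
  | zero => rw [sw_zero, map_zero, mul_zero, map_zero]
  | add y₁ y₂ h₁ h₂ => rw [sw_add, h₁, h₂, map_add, mul_add, map_add]
  | tmul ξ' η' =>
    rw [sw_tmul, LinearMap.compl₂_apply]
    exact triW_aux K H ρA ρV ρW lW a P v hA1 x ξ' η'

lemma stepE (x : H ⊗[K] H) :
    sw K H x ρA (adjHom K H ρW ρV) (LinearMap.llcomp K V W W ∘ₗ lW) a P v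
      = triW K H ρA ρV ρW lW a P v
          (LinearMap.lTensor H (LinearMap.lTensor H (SH K H) ∘ₗ ΔH K H) x) := by
  induction x using TensorProduct.induction_on with
  | zero => rw [sw_zero, map_zero, map_zero]; rfl
  | add x₁ x₂ h₁ h₂ =>
    rw [sw_add, LinearMap.add_apply, h₁, h₂, map_add, map_add]
  | tmul ξ η =>
    rw [sw_tmul, LinearMap.lTensor_tmul]
    have sub : ∀ z : H ⊗[K] H,
        lW (ρA ξ a) (conjEnd K H ρW (ρV ∘ₗ SH K H) z P v)
          = triW K H ρA ρV ρW lW a P v (ξ ⊗ₜ[K] (LinearMap.lTensor H (SH K H) z)) := by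
      intro z
      induction z using TensorProduct.induction_on with
      | zero => simp [tmul_zero]
      | add z₁ z₂ h₁ h₂ =>
        rw [map_add, LinearMap.add_apply, LinearMap.add_apply, map_add, h₁, h₂,
          map_add, tmul_add, map_add]
      | tmul η₁ η₂ => rfl
    exact sub (ΔH K H η)

lemma stepF {Rm Rinv : H ⊗[K] H} (hR : IsQuasitriangular K H Rm Rinv) :
    LinearMap.lTensor H (LinearMap.lTensor H (SH K H) ∘ₗ ΔH K H) Rinv
      = ins3 K H Rinv * ins2 K H Rm := by
  have hG : ∀ x y : H ⊗[K] H,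
      LinearMap.lTensor H (LinearMap.lTensor H (SH K H)) (ins3 K H x * ins2 K H y)
        = ins3 K H x * ins2 K H (LinearMap.lTensor H (SH K H) y) := by
    intro x y
    induction x using TensorProduct.induction_on with
    | zero => simp [zero_mul]
    | add x₁ x₂ h₁ h₂ => simp only [map_add, add_mul, h₁, h₂]
    | tmul a b =>
      induction y using TensorProduct.induction_on with
      | zero => simp [mul_zero]
      | add y₁ y₂ h₁ h₂ => simp only [map_add, mul_add, h₁, h₂]
      | tmul c d =>
        show LinearMap.lTensor H (LinearMap.lTensor H (SH K H))
            ((a ⊗ₜ[K] (b ⊗ₜ[K] (1 : H))) * (c ⊗ₜ[K] ((1 : H) ⊗ₜ[K] d))) = _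
        rw [Algebra.TensorProduct.tmul_mul_tmul, Algebra.TensorProduct.tmul_mul_tmul,
          one_mul, mul_one, LinearMap.lTensor_tmul, LinearMap.lTensor_tmul]
        show (a * c) ⊗ₜ[K] (b ⊗ₜ[K] SH K H d)
            = (a ⊗ₜ[K] (b ⊗ₜ[K] (1 : H))) * (c ⊗ₜ[K] ((1 : H) ⊗ₜ[K] SH K H d))
        rw [Algebra.TensorProduct.tmul_mul_tmul, Algebra.TensorProduct.tmul_mul_tmul,
          one_mul, mul_one]
  have h0 : LinearMap.lTensor H (LinearMap.lTensor H (SH K H) ∘ₗ ΔH K H) Rinv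
      = LinearMap.lTensor H (LinearMap.lTensor H (SH K H)) (comulRight K H Rinv) := by
    rw [LinearMap.lTensor_comp]
    rfl
  rw [h0, hexagon2_inv hR, hG, lTensor_antipode_Rinv hR]

end triW


/-- for a quasi-commutative `H`-module algebra `A` and
quasi-commutative left `H`-module `A`-bimodules `V`, `W`, the right `A`-linear maps
`Hom_A(V,W)` form a quasi-commutative left `H`-module `A`-bimodule:
`P·a = (R̄^α ▷ a)·(R̄_α ▶ P)`, where `P·a = P ∘ l_a` and `a·P = l_a ∘ P`. -/
theorem hom_quasi_commutative (Rm Rinv : H ⊗[K] H)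
    (hR : IsQuasitriangular K H Rm Rinv)
    -- the quasi-commutative H-module algebra A
    (mA : A →ₗ[K] A →ₗ[K] A) (eA : A) (ρA : H →ₗ[K] A →ₗ[K] A)
    (hAalg : ∀ a b c : A, mA (mA a b) c = mA a (mA b c))
    (hAone : ∀ a : A, mA eA a = a ∧ mA a eA = a)
    (hAma : IsModuleAlgebra K H mA ρA)
    (hqcA : ∀ a b : A, mA a b = sw K H Rinv ρA ρA mA b a)
    -- the quasi-commutative left H-module A-bimodules V and W
    (ρV : H →ₗ[K] V →ₗ[K] V) (hV : IsHAction K H ρV)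
    (ρW : H →ₗ[K] W →ₗ[K] W) (hW : IsHAction K H ρW)
    (lV rV : A →ₗ[K] V →ₗ[K] V) (lW rW : A →ₗ[K] W →ₗ[K] W)
    (hlV : ∀ (a b : A) (v : V), lV (mA a b) v = lV a (lV b v)) (hlVe : ∀ v : V, lV eA v = v)
    (hrV : ∀ (a b : A) (v : V), rV (mA a b) v = rV b (rV a v)) (hrVe : ∀ v : V, rV eA v = v)
    (hlrV : ∀ (a b : A) (v : V), lV a (rV b v) = rV b (lV a v))
    (hlW : ∀ (a b : A) (w : W), lW (mA a b) w = lW a (lW b w)) (hlWe : ∀ w : W, lW eA w = w)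
    (hrW : ∀ (a b : A) (w : W), rW (mA a b) w = rW b (rW a w)) (hrWe : ∀ w : W, rW eA w = w)
    (hlrW : ∀ (a b : A) (w : W), lW a (rW b w) = rW b (lW a w))
    (hclV : ∀ (ξ : H) (a : A) (v : V), ρV ξ (lV a v) = sw K H (ΔH K H ξ) ρA ρV lV a v)
    (hcrV : ∀ (ξ : H) (a : A) (v : V), ρV ξ (rV a v) = sw K H (ΔH K H ξ) ρV ρA rV.flip v a)
    (hclW : ∀ (ξ : H) (a : A) (w : W), ρW ξ (lW a w) = sw K H (ΔH K H ξ) ρA ρW lW a w)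
    (hcrW : ∀ (ξ : H) (a : A) (w : W), ρW ξ (rW a w) = sw K H (ΔH K H ξ) ρW ρA rW.flip w a)
    -- quasi-commutativity: `v·a = (R̄^α ▷ a)·(R̄_α ▷ v)`
    (hqcV : ∀ (a : A) (v : V), rV a v = sw K H Rinv ρA ρV lV a v)
    (hqcW : ∀ (a : A) (w : W), rW a w = sw K H Rinv ρA ρW lW a w) :
    ∀ (a : A) (P : V →ₗ[K] W), (∀ (b : A) (v : V), P (rV b v) = rW b (P v)) →
      P ∘ₗ lV a
        = sw K H Rinv ρA (adjHom K H ρW ρV) (LinearMap.llcomp K V W W ∘ₗ lW) a P := by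
  intro a P hP
  have hA1 := hAma.1.1
  have hA2 := hAma.1.2
  have hrVmap : rV = sw K H Rinv ρA ρV lV :=
    LinearMap.ext fun b => LinearMap.ext fun u => hqcV b u
  have hcomp : rV.compr₂ P = (sw K H Rinv ρA ρW lW).compl₂ P := by
    apply LinearMap.ext; intro b; apply LinearMap.ext; intro u
    simp only [LinearMap.compr₂_apply, LinearMap.compl₂_apply]
    rw [hP, hqcW]
  apply LinearMap.ext; intro v
  show P (lV a v) = sw K H Rinv ρA (adjHom K H ρW ρV) (LinearMap.llcomp K V W W ∘ₗ lW) a P v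
  have stepA : lV a v = sw K H Rm ρA ρV rV a v := by
    rw [hrVmap, ← sw_mul K H ρA ρV hA1 hV.1 Rinv Rm lV a v, hR.inv_mul,
      sw_one K H ρA ρV hA2 hV.2 lV a v]
  calc P (lV a v) = P (sw K H Rm ρA ρV rV a v) := by rw [← stepA]
    _ = sw K H Rm ρA ρV (rV.compr₂ P) a v := sw_post K H Rm ρA ρV rV P a v
    _ = sw K H Rm ρA ρV ((sw K H Rinv ρA ρW lW).compl₂ P) a v := by rw [hcomp]
    _ = triW K H ρA ρV ρW lW a P v (ins3 K H Rinv * ins2 K H Rm) :=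
        stepD K H ρA ρV ρW lW a P v hA1 Rinv Rm
    _ = triW K H ρA ρV ρW lW a P v
          (LinearMap.lTensor H (LinearMap.lTensor H (SH K H) ∘ₗ ΔH K H) Rinv) := by
        rw [stepF K H hR]
    _ = sw K H Rinv ρA (adjHom K H ρW ρV) (LinearMap.llcomp K V W W ∘ₗ lW) a P v :=
        (stepE K H ρA ρV ρW lW a P v Rinv).symm


end TwistPaper
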